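/- Expected smoothness bound for τ-partition nice sampling (Lemma 1(i)): assume each f_i is convex and L_i-smooth and each partition average f_{C_j} is L_{C_j}-smooth. Then for all x, y ∈ ℝ^d, Σ_{j=1}^K q_{C_j} · binom(n_{C_j},τ)^{-1} Σ_{S⊆C_j, |S|=τ} ‖(1/n) Σ_{i∈S} (n_{C_j}/(q_{C_j}τ)) (∇f_i(x) − ∇f_i(y))‖² ≤ 2𝓛(τ)·(f(x) − f(y) − ⟨∇f(y), x−y⟩), where 𝓛(τ) = (1/(nτ)) · max_j [n_{C_j}/(q_{C_j}(n_{C_j}−1))] · ((τ−1)·L_{C_j}·n_{C_j} + (n_{C_j}−τ)·max_{i∈C_j} L_i). -/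

import Mathlib

open Finset


open Finset

lemma filter_mem_powersetCard {ι : Type*} [DecidableEq ι] (A : Finset ι) (i : ι) (hi : i ∈ A)
    (t : ℕ) :
    (A.powersetCard (t+1)).filter (fun S => i ∈ S)
      = ((A.erase i).powersetCard t).image (insert i) := by
  ext S
  simp only [Finset.mem_filter, Finset.mem_powersetCard, Finset.mem_image]
  constructor
  · rintro ⟨⟨hSA, hScard⟩, hiS⟩
    refine ⟨S.erase i, ⟨Finset.erase_subset_erase i hSA, ?_⟩, Finset.insert_erase hiS⟩
    rw [Finset.card_erase_of_mem hiS, hScard]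
    rfl
  · rintro ⟨T, ⟨hTA, hTcard⟩, rfl⟩
    have hiT : i ∉ T := fun h => (Finset.mem_erase.mp (hTA h)).1 rfl
    exact ⟨⟨Finset.insert_subset hi (hTA.trans (Finset.erase_subset i A)),
      by rw [Finset.card_insert_of_notMem hiT, hTcard]⟩, Finset.mem_insert_self i T⟩

lemma injOn_insert_powersetCard {ι : Type*} [DecidableEq ι] (A : Finset ι) (i : ι) (t : ℕ) :
    Set.InjOn (insert i) ((A.erase i).powersetCard t : Set (Finset ι)) := by
  intro T hT T' hT' h
  rw [Finset.mem_coe, Finset.mem_powersetCard] at hT hT'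
  have hiT : i ∉ T := fun hc => (Finset.mem_erase.mp (hT.1 hc)).1 rfl
  have hiT' : i ∉ T' := fun hc => (Finset.mem_erase.mp (hT'.1 hc)).1 rfl
  rw [← Finset.erase_insert hiT, ← Finset.erase_insert hiT', h]

lemma card_filter_one {ι : Type*} [DecidableEq ι] (A : Finset ι) (i : ι) (hi : i ∈ A) (t : ℕ) :
    ((A.powersetCard (t+1)).filter (fun S => i ∈ S)).card = (A.card - 1).choose t := by
  rw [filter_mem_powersetCard A i hi t,
    Finset.card_image_of_injOn (injOn_insert_powersetCard A i t),
    Finset.card_powersetCard, Finset.card_erase_of_mem hi]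

/-- number of τ-subsets containing a given pair -/
def pairCount {ι : Type*} (A : Finset ι) (τ : ℕ) : ℕ :=
  if τ ≤ 1 then 0 else (A.card - 2).choose (τ - 2)

lemma card_filter_pair {ι : Type*} [DecidableEq ι] (A : Finset ι) (i k : ι) (hi : i ∈ A)
    (hk : k ∈ A) (hik : i ≠ k) (τ : ℕ) (hτ1 : 1 ≤ τ) :
    ((A.powersetCard τ).filter (fun S => i ∈ S ∧ k ∈ S)).card = pairCount A τ := by
  obtain ⟨t, rfl⟩ : ∃ t, τ = t + 1 := ⟨τ - 1, (Nat.succ_pred_eq_of_pos hτ1).symm⟩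
  have h1 : (A.powersetCard (t+1)).filter (fun S => i ∈ S ∧ k ∈ S)
      = (((A.erase i).powersetCard t).filter (fun T => k ∈ T)).image (insert i) := by
    have : (A.powersetCard (t+1)).filter (fun S => i ∈ S ∧ k ∈ S)
        = ((A.powersetCard (t+1)).filter (fun S => i ∈ S)).filter (fun S => k ∈ S) := by
      rw [Finset.filter_filter]
    rw [this, filter_mem_powersetCard A i hi t, Finset.filter_image]
    congr 1
    apply Finset.filter_congr
    intro T _
    simp only [Function.comp, Finset.mem_insert]
    exact ⟨fun h => h.resolve_left (fun he => hik he.symm), fun h => Or.inr h⟩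

  rw [h1, Finset.card_image_of_injOn ((injOn_insert_powersetCard A i t).mono
    (by intro T hT; simp only [Finset.coe_filter, Set.mem_setOf_eq] at hT
        rw [Finset.mem_coe]; exact hT.1))]
  rcases Nat.eq_zero_or_pos t with rfl | ht
  · have : ((A.erase i).powersetCard 0).filter (fun T => k ∈ T) = ∅ := by
      rw [Finset.powersetCard_zero]
      ext T; simp only [Finset.mem_filter, Finset.mem_singleton, Finset.notMem_empty,
        iff_false, not_and]
      rintro rfl; exact Finset.notMem_empty k
    rw [this]
    simp [pairCount]
  · obtain ⟨s, rfl⟩ : ∃ s, t = s + 1 := ⟨t - 1, (Nat.succ_pred_eq_of_pos ht).symm⟩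
    have hk' : k ∈ A.erase i := Finset.mem_erase.mpr ⟨fun h => hik h.symm, hk⟩
    rw [card_filter_one (A.erase i) k hk' s, Finset.card_erase_of_mem hi]
    simp only [pairCount]
    rw [if_neg (by omega)]
    congr 1 <;> omega

lemma choose_id1 (m τ : ℕ) (h1 : 1 ≤ τ) (h2 : τ ≤ m) :
    m.choose τ * τ = m * (m-1).choose (τ-1) := by
  obtain ⟨t, rfl⟩ : ∃ t, τ = t + 1 := ⟨τ - 1, by omega⟩
  obtain ⟨m', rfl⟩ : ∃ m', m = m' + 1 := ⟨m - 1, by omega⟩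
  simp only [Nat.add_sub_cancel]
  exact (Nat.add_one_mul_choose_eq m' t).symm

lemma choose_id2 {ι : Type*} (A : Finset ι) (τ : ℕ) (h1 : 1 ≤ τ) (hm : 2 ≤ A.card)
    (h2 : τ ≤ A.card) :
    A.card.choose τ * (τ * (τ - 1)) = A.card * (A.card - 1) * pairCount A τ := by
  set m := A.card with hm'
  rcases Nat.lt_or_ge τ 2 with hτ2 | hτ2
  · have : τ = 1 := by omega
    subst this
    simp [pairCount]
  · obtain ⟨t, rfl⟩ : ∃ t, τ = t + 2 := ⟨τ - 2, by omega⟩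
    have e1 : m.choose (t+2) * (t+2) = m * (m-1).choose (t+1) := choose_id1 m (t+2) (by omega) h2
    have e2 : (m-1).choose (t+1) * (t+1) = (m-1) * (m-2).choose t := by
      have := choose_id1 (m-1) (t+1) (by omega) (by omega)
      simpa [show m - 1 - 1 = m - 2 by omega] using this
    have hpc : pairCount A (t+2) = (m-2).choose t := by
      simp only [pairCount, if_neg (by omega : ¬ t + 2 ≤ 1)]
      congr 1
    rw [hpc]
    calc m.choose (t+2) * ((t+2) * (t+2-1)) = (m.choose (t+2) * (t+2)) * (t+1) := by
          rw [show t+2-1 = t+1 from rfl]; ring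
      _ = m * ((m-1).choose (t+1) * (t+1)) := by rw [e1]; ring
      _ = m * ((m-1) * (m-2).choose t) := by rw [e2]
      _ = m * (m-1) * (m-2).choose t := by ring

section identity
variable {E : Type*} [NormedAddCommGroup E] [InnerProductSpace ℝ E]

local notation "⟪" x ", " y "⟫" => @inner ℝ _ _ x y

lemma sum_powersetCard_norm_sq {ι : Type*} [DecidableEq ι] (A : Finset ι) (h : ι → E)
    (τ : ℕ) (hτ1 : 1 ≤ τ) :
    ∑ S ∈ A.powersetCard τ, (‖∑ i ∈ S, h i‖:ℝ)^2
      = (pairCount A τ : ℝ) * ‖∑ i ∈ A, h i‖^2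
        + (((A.card - 1).choose (τ-1) : ℝ) - (pairCount A τ : ℝ)) * ∑ i ∈ A, ‖h i‖^2 := by
  set P := A.powersetCard τ with hP
  have expand : ∀ S ∈ P, (‖∑ i ∈ S, h i‖:ℝ)^2
      = ∑ i ∈ A, ∑ k ∈ A, (if i ∈ S ∧ k ∈ S then ⟪h i, h k⟫ else 0) := by
    intro S hS
    have hSA : S ⊆ A := (Finset.mem_powersetCard.mp hS).1
    have e1 : (‖∑ i ∈ S, h i‖:ℝ)^2 = ∑ i ∈ S, ∑ k ∈ S, ⟪h i, h k⟫ := by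
      rw [← real_inner_self_eq_norm_sq, sum_inner]
      exact Finset.sum_congr rfl fun i _ => inner_sum _ _ _
    rw [e1]
    rw [← Finset.sum_subset hSA (fun i _ hiS => ?_)]
    · apply Finset.sum_congr rfl
      intro i hiS
      rw [← Finset.sum_subset hSA (fun k _ hkS => by simp [hkS])]
      exact Finset.sum_congr rfl fun k hkS => by simp [hiS, hkS]
    · apply Finset.sum_eq_zero
      intro k _
      simp [hiS]
  rw [Finset.sum_congr rfl expand, Finset.sum_comm]
  have swap2 : ∀ i ∈ A, ∑ S ∈ P, ∑ k ∈ A, (if i ∈ S ∧ k ∈ S then ⟪h i, h k⟫ else 0)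
      = ∑ k ∈ A, ((P.filter (fun S => i ∈ S ∧ k ∈ S)).card : ℝ) * ⟪h i, h k⟫ := by
    intro i _
    rw [Finset.sum_comm]
    apply Finset.sum_congr rfl
    intro k _
    rw [← Finset.sum_filter, Finset.sum_const, nsmul_eq_mul]
  rw [Finset.sum_congr rfl swap2]
  have vals : ∀ i ∈ A, ∀ k ∈ A, ((P.filter (fun S => i ∈ S ∧ k ∈ S)).card : ℝ)
      = if i = k then ((A.card - 1).choose (τ-1) : ℝ) else (pairCount A τ : ℝ) := by
    intro i hi k hk
    by_cases hik : i = k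
    · subst hik
      rw [if_pos rfl]
      obtain ⟨t, rfl⟩ : ∃ t, τ = t + 1 := ⟨τ - 1, by omega⟩
      have : P.filter (fun S => i ∈ S ∧ i ∈ S) = P.filter (fun S => i ∈ S) := by
        apply Finset.filter_congr; intro S _; simp
      rw [this, hP, card_filter_one A i hi t]
      norm_num
    · rw [if_neg hik, hP, card_filter_pair A i k hi hk hik τ hτ1]
  have final : ∑ i ∈ A, ∑ k ∈ A, ((P.filter (fun S => i ∈ S ∧ k ∈ S)).card : ℝ) * ⟪h i, h k⟫
      = ∑ i ∈ A, ∑ k ∈ A, ((pairCount A τ : ℝ) * ⟪h i, h k⟫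
          + (if i = k then (((A.card - 1).choose (τ-1) : ℝ) - (pairCount A τ : ℝ)) * ‖h i‖^2 else 0)) := by
    apply Finset.sum_congr rfl; intro i hi
    apply Finset.sum_congr rfl; intro k hk
    rw [vals i hi k hk]
    by_cases hik : i = k
    · subst hik; simp [real_inner_self_eq_norm_sq]; ring
    · simp [hik]
  rw [final]
  have e2 : ∑ i ∈ A, ∑ k ∈ A, (pairCount A τ : ℝ) * ⟪h i, h k⟫
      = (pairCount A τ : ℝ) * ‖∑ i ∈ A, h i‖^2 := by
    rw [← real_inner_self_eq_norm_sq, sum_inner, Finset.mul_sum]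
    apply Finset.sum_congr rfl; intro i _
    rw [inner_sum, Finset.mul_sum]
  have e3 : ∑ i ∈ A, ∑ k ∈ A, (if i = k then (((A.card - 1).choose (τ-1) : ℝ) - (pairCount A τ : ℝ)) * ‖h i‖^2 else 0)
      = (((A.card - 1).choose (τ-1) : ℝ) - (pairCount A τ : ℝ)) * ∑ i ∈ A, ‖h i‖^2 := by
    rw [Finset.mul_sum]
    apply Finset.sum_congr rfl; intro i hi
    rw [Finset.sum_ite_eq A i (fun _ => (((A.card - 1).choose (τ-1) : ℝ) - (pairCount A τ : ℝ)) * ‖h i‖^2), if_pos hi]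
  rw [← e2, ← e3, ← Finset.sum_add_distrib]
  apply Finset.sum_congr rfl; intro i _
  rw [Finset.sum_add_distrib]
end identity


open Finset Set Topology Filter

section analysis
variable {E : Type*} [NormedAddCommGroup E] [InnerProductSpace ℝ E] [CompleteSpace E]

local notation "⟪" x ", " y "⟫" => @inner ℝ _ _ x y

lemma line_hasDerivAt {f : E → ℝ} {gz : E} {y v : E} (t₀ : ℝ)
    (hg : HasGradientAt f gz (y + t₀ • v)) :
    HasDerivAt (fun t : ℝ => f (y + t • v)) ⟪gz, v⟫ t₀ := by
  have hline : HasDerivAt (fun t : ℝ => y + t • v) v t₀ := by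
    simpa using ((hasDerivAt_id t₀).smul_const v).const_add y
  have h := hg.hasFDerivAt.comp_hasDerivAt t₀ hline
  simpa [InnerProductSpace.toDual_apply_apply, Function.comp_def] using h

lemma first_order {f : E → ℝ} (hconv : ConvexOn ℝ Set.univ f)
    {y : E} {gy : E} (hgy : HasGradientAt f gy y) (x : E) :
    f y + ⟪gy, x - y⟫ ≤ f x := by
  set φ := fun t : ℝ => f (y + t • (x - y)) with hφ
  have hd : HasDerivAt φ ⟪gy, x - y⟫ 0 := line_hasDerivAt 0 (by simpa using hgy)
  have hφ0 : φ 0 = f y := by simp [hφ]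
  have key : ∀ t ∈ Set.Ioc (0:ℝ) 1, slope φ 0 t ≤ f x - f y := by
    intro t ht
    have hcvx := hconv.2 (Set.mem_univ y) (Set.mem_univ x)
      (by linarith [ht.2] : (0:ℝ) ≤ 1 - t) (le_of_lt ht.1) (by ring)
    have hpt : (1 - t) • y + t • x = y + t • (x - y) := by
      rw [sub_smul, one_smul, smul_sub]; abel
    rw [hpt] at hcvx
    rw [slope_def_field, hφ0, sub_zero, div_le_iff₀ ht.1]
    simp only [smul_eq_mul] at hcvx
    nlinarith [hcvx]
  have htend : Filter.Tendsto (slope φ 0) (𝓝[>] 0) (𝓝 ⟪gy, x - y⟫) :=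
    (hasDerivAt_iff_tendsto_slope.mp hd).mono_left
      (nhdsWithin_mono 0 (fun t ht => Set.mem_compl_singleton_iff.mpr (ne_of_gt ht)))
  have hle : ⟪gy, x - y⟫ ≤ f x - f y := by
    refine le_of_tendsto htend ?_
    filter_upwards [Ioc_mem_nhdsGT zero_lt_one] with t ht using key t ht
  linarith

lemma descent {f : E → ℝ} {g : E → E} (hg : ∀ z, HasGradientAt f (g z) z)
    {L : ℝ} (hL : 0 ≤ L) (hLip : ∀ u v, ‖g u - g v‖ ≤ L * ‖u - v‖) (u v : E) :
    f u ≤ f v + ⟪g v, u - v⟫ + L / 2 * ‖u - v‖ ^ 2 := by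
  set w := u - v with hw
  set χ := fun t : ℝ => f (v + t • w) - t * ⟪g v, w⟫ - L * t^2 / 2 * ‖w‖^2 with hχ
  have hχd : ∀ t : ℝ, HasDerivAt χ (⟪g (v + t • w), w⟫ - ⟪g v, w⟫ - L * t * ‖w‖^2) t := by
    intro t
    have h1 := line_hasDerivAt t (hg (v + t • w))
    have h2 : HasDerivAt (fun t : ℝ => t * ⟪g v, w⟫) ⟪g v, w⟫ t := by
      simpa using (hasDerivAt_id t).mul_const ⟪g v, w⟫
    have h3 : HasDerivAt (fun t : ℝ => L * t^2 / 2 * ‖w‖^2) (L * t * ‖w‖^2) t := by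
      have h3' : HasDerivAt (fun s : ℝ => L / 2 * ‖w‖^2 * s^2) (L / 2 * ‖w‖^2 * (2 * t^1)) t :=
        (hasDerivAt_pow 2 t).const_mul _
      have hfe : (fun t : ℝ => L * t^2 / 2 * ‖w‖^2) = (fun s : ℝ => L / 2 * ‖w‖^2 * s^2) := by
        funext s; ring
      rw [hfe]
      convert h3' using 1; ring
    exact (h1.sub h2).sub h3
  have hχdiff : Differentiable ℝ χ := fun t => (hχd t).differentiableAt
  have hmono : AntitoneOn χ (Set.Icc 0 1) := by
    apply antitoneOn_of_deriv_nonpos (convex_Icc 0 1) hχdiff.continuous.continuousOn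
      (fun t _ => (hχdiff t).differentiableWithinAt)
    intro t ht
    rw [interior_Icc] at ht
    rw [(hχd t).deriv]
    have hb : ⟪g (v + t • w) - g v, w⟫ ≤ L * t * ‖w‖^2 := by
      calc ⟪g (v + t • w) - g v, w⟫ ≤ ‖g (v + t • w) - g v‖ * ‖w‖ := real_inner_le_norm _ _
        _ ≤ (L * ‖(v + t • w) - v‖) * ‖w‖ :=
            mul_le_mul_of_nonneg_right (hLip _ _) (norm_nonneg _)
        _ = L * (|t| * ‖w‖) * ‖w‖ := by
            rw [add_sub_cancel_left, norm_smul, Real.norm_eq_abs]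
        _ = L * t * ‖w‖^2 := by rw [abs_of_pos ht.1]; ring
    rw [inner_sub_left] at hb
    linarith
  have h01 := hmono (Set.left_mem_Icc.mpr zero_le_one) (Set.right_mem_Icc.mpr zero_le_one)
    zero_le_one
  have e0 : χ 0 = f v := by simp [hχ]
  have e1 : χ 1 = f u - ⟪g v, w⟫ - L / 2 * ‖w‖^2 := by
    have hvw : v + (1:ℝ) • w = u := by rw [one_smul, hw]; abel
    simp only [hχ, hvw, one_pow, mul_one, one_mul]
  rw [e0, e1] at h01
  rw [hw] at *
  linarith

lemma cocoercivity {f : E → ℝ} {g : E → E} (hg : ∀ z, HasGradientAt f (g z) z)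
    (hconv : ConvexOn ℝ Set.univ f) {L : ℝ} (hLip : ∀ u v, ‖g u - g v‖ ≤ L * ‖u - v‖)
    (x y : E) : ‖g x - g y‖^2 ≤ 2 * L * (f x - f y - ⟪g y, x - y⟫) := by
  rcases le_or_gt L 0 with hL | hL
  · have hconst : ∀ u v : E, g u = g v := by
      intro u v
      have h1 := hLip u v
      have h2 : L * ‖u - v‖ ≤ 0 := mul_nonpos_of_nonpos_of_nonneg hL (norm_nonneg _)
      have h3 : ‖g u - g v‖ ≤ 0 := le_trans h1 h2
      exact sub_eq_zero.mp (norm_le_zero_iff.mp h3)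
    have hxy : g x = g y := hconst x y
    have hD1 : f y + ⟪g y, x - y⟫ ≤ f x := first_order hconv (hg y) x
    have hD2 : f x + ⟪g x, y - x⟫ ≤ f y := first_order hconv (hg x) y
    rw [hxy] at hD2
    have hneg : ⟪g y, y - x⟫ = -⟪g y, x - y⟫ := by
      rw [← inner_neg_right]; congr 1; abel
    rw [hneg] at hD2
    have hzero : f x - f y - ⟪g y, x - y⟫ = 0 := by linarith
    rw [hzero, hxy]
    simp
  · set φ := fun z => f z - ⟪g y, z⟫ with hφdef
    set G := fun z => g z - g y with hGdef
    have hφg : ∀ z, HasGradientAt φ (G z) z := by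
      intro z
      have hlin : HasFDerivAt (fun z : E => ⟪g y, z⟫) (InnerProductSpace.toDual ℝ E (g y)) z :=
        (InnerProductSpace.toDual ℝ E (g y)).hasFDerivAt
      have h1 : HasFDerivAt φ
          (InnerProductSpace.toDual ℝ E (g z) - InnerProductSpace.toDual ℝ E (g y)) z :=
        (hg z).hasFDerivAt.sub hlin
      rw [← map_sub] at h1
      simpa [hGdef] using h1.hasGradientAt
    have hφconv : ConvexOn ℝ Set.univ φ := by
      refine ⟨convex_univ, fun u _ v _ a b ha hb hab => ?_⟩
      have hfc := hconv.2 (Set.mem_univ u) (Set.mem_univ v) ha hb hab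
      simp only [hφdef, smul_eq_mul] at *
      rw [inner_add_right, real_inner_smul_right, real_inner_smul_right]
      linarith
    have hφLip : ∀ u v, ‖G u - G v‖ ≤ L * ‖u - v‖ := by
      intro u v
      simpa [hGdef, sub_sub_sub_cancel_right] using hLip u v
    have hmin : ∀ u, φ y ≤ φ u := by
      intro u
      have h := first_order hφconv (hφg y) u
      simp only [hGdef, sub_self, inner_zero_left] at h
      linarith
    set w := x - L⁻¹ • (g x - g y) with hwdef
    have hdesc := descent hφg (le_of_lt hL) hφLip w x
    have hwx : w - x = -(L⁻¹ • (g x - g y)) := by rw [hwdef]; abel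
    have hinner : ⟪G x, w - x⟫ = -(L⁻¹ * ‖g x - g y‖^2) := by
      rw [hwx, inner_neg_right, real_inner_smul_right]
      simp only [hGdef]
      rw [real_inner_self_eq_norm_sq]
    have hnorm : ‖w - x‖^2 = L⁻¹^2 * ‖g x - g y‖^2 := by
      rw [hwx, norm_neg, norm_smul, Real.norm_eq_abs, abs_of_pos (inv_pos.mpr hL)]
      ring
    have hL' : L ≠ 0 := ne_of_gt hL
    have hchain : φ y ≤ φ x - 1/(2*L) * ‖g x - g y‖^2 :=
      calc φ y ≤ φ w := hmin w
        _ ≤ φ x + ⟪G x, w - x⟫ + L / 2 * ‖w - x‖^2 := hdesc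
        _ = φ x - 1/(2*L) * ‖g x - g y‖^2 := by
            rw [hinner, hnorm]; field_simp; ring
    have hφdiff : φ x - φ y = f x - f y - ⟪g y, x - y⟫ := by
      simp only [hφdef, inner_sub_right]; ring
    have hfin : 1/(2*L) * ‖g x - g y‖^2 ≤ f x - f y - ⟪g y, x - y⟫ := by
      rw [← hφdiff]; linarith
    calc ‖g x - g y‖^2 = 2*L * (1/(2*L) * ‖g x - g y‖^2) := by field_simp
      _ ≤ 2*L*(f x - f y - ⟪g y, x - y⟫) := mul_le_mul_of_nonneg_left hfin (by positivity)

end analysis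

private lemma scalar_key (qj b nR τR m N1 P2 LCj Lmax SD : ℝ)
    (hb : b ≠ 0) (hq : qj ≠ 0) (hn : nR ≠ 0) (hτ : τR ≠ 0) (hm1 : m - 1 ≠ 0) (hm0 : m ≠ 0)
    (hN1 : N1 = b * τR / m) (hP2 : P2 = b * (τR * (τR - 1)) / (m * (m - 1))) :
    qj * b⁻¹ * ((nR⁻¹ * (m / (qj * τR)))^2
        * (P2 * (2 * LCj * m * SD) + (N1 - P2) * (2 * Lmax * SD)))
      = 2/(nR^2 * τR) * (m / (qj * (m - 1)) * ((τR - 1) * LCj * m + (m - τR) * Lmax)) * SD := by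
  subst hN1 hP2
  field_simp
  ring

open Finset RealInnerProductSpace

set_option maxHeartbeats 1600000 in
/-- Expected smoothness bound for τ-partition nice sampling (Lemma 1(i)). -/
theorem stmt2 {d n K : ℕ} (hn : 1 ≤ n) (hK : 0 < K)
    (f : Fin n → EuclideanSpace ℝ (Fin d) → ℝ)
    (g : Fin n → EuclideanSpace ℝ (Fin d) → EuclideanSpace ℝ (Fin d))
    (hgrad : ∀ i x, HasGradientAt (f i) (g i x) x)
    (C : Fin K → Finset (Fin n))
    (hpart : ∀ i : Fin n, ∃! j, i ∈ C j)
    (hcard : ∀ j, 2 ≤ (C j).card)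
    (q : Fin K → ℝ) (hq : ∀ j, 0 < q j) (hqsum : ∑ j, q j = 1)
    (τ : ℕ) (hτ1 : 1 ≤ τ) (hτ : ∀ j, τ ≤ (C j).card)
    (L : Fin n → ℝ) (LC : Fin K → ℝ)
    (hconv : ∀ i, ConvexOn ℝ Set.univ (f i))
    (hLi : ∀ i x y, ‖g i x - g i y‖ ≤ L i * ‖x - y‖)
    (hLC : ∀ j x y,
      ‖((C j).card : ℝ)⁻¹ • ∑ i ∈ C j, g i x -
          ((C j).card : ℝ)⁻¹ • ∑ i ∈ C j, g i y‖ ≤ LC j * ‖x - y‖)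
    (x y : EuclideanSpace ℝ (Fin d)) :
    ∑ j, q j * ((C j).card.choose τ : ℝ)⁻¹ *
        ∑ S ∈ (C j).powersetCard τ,
          ‖(n : ℝ)⁻¹ • ∑ i ∈ S, (((C j).card : ℝ) / (q j * (τ : ℝ))) • (g i x - g i y)‖ ^ 2
      ≤ 2 *
          (((n : ℝ) * (τ : ℝ))⁻¹ *
            (Finset.univ.sup' ⟨⟨0, hK⟩, Finset.mem_univ _⟩ fun j =>
              ((C j).card : ℝ) / (q j * (((C j).card : ℝ) - 1)) *
                (((τ : ℝ) - 1) * LC j * ((C j).card : ℝ) +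
                  (((C j).card : ℝ) - (τ : ℝ)) *
                    (C j).sup' (Finset.card_pos.mp (lt_of_lt_of_le (by norm_num) (hcard j))) L))) *
          ((n : ℝ)⁻¹ * ∑ i, f i x - (n : ℝ)⁻¹ * ∑ i, f i y -
            ⟪(n : ℝ)⁻¹ • ∑ i, g i y, x - y⟫) := by
  classical
  have hn0 : (0:ℝ) < n := by exact_mod_cast Nat.lt_of_lt_of_le Nat.zero_lt_one hn
  have hτ0 : (0:ℝ) < τ := by exact_mod_cast Nat.lt_of_lt_of_le Nat.zero_lt_one hτ1
  set D : Fin n → ℝ := fun i => f i x - f i y - ⟪g i y, x - y⟫ with hD_def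
  have hD : ∀ i, 0 ≤ D i := by
    intro i
    have := first_order (hconv i) (hgrad i y) x
    simp only [hD_def]
    linarith
  have hHi : ∀ i, ‖g i x - g i y‖^2 ≤ 2 * L i * D i := fun i =>
    cocoercivity (hgrad i) (hconv i) (hLi i) x y
  -- the sup' coefficient
  set M : ℝ := Finset.univ.sup' ⟨⟨0, hK⟩, Finset.mem_univ _⟩ (fun j =>
      ((C j).card : ℝ) / (q j * (((C j).card : ℝ) - 1)) *
        (((τ : ℝ) - 1) * LC j * ((C j).card : ℝ) +
          (((C j).card : ℝ) - (τ : ℝ)) *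
            (C j).sup' (Finset.card_pos.mp (lt_of_lt_of_le (by norm_num) (hcard j))) L))
    with hM_def
  -- key per-partition bound
  have key : ∀ j : Fin K, q j * ((C j).card.choose τ : ℝ)⁻¹ *
        ∑ S ∈ (C j).powersetCard τ,
          ‖(n : ℝ)⁻¹ • ∑ i ∈ S, (((C j).card : ℝ) / (q j * (τ : ℝ))) • (g i x - g i y)‖ ^ 2
      ≤ 2/((n:ℝ)^2 * τ) * (((C j).card : ℝ) / (q j * (((C j).card : ℝ) - 1)) *
          (((τ : ℝ) - 1) * LC j * ((C j).card : ℝ) +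
            (((C j).card : ℝ) - (τ : ℝ)) *
              (C j).sup' (Finset.card_pos.mp (lt_of_lt_of_le (by norm_num) (hcard j))) L))
          * ∑ i ∈ C j, D i := by
    intro j
    have hm2 : 2 ≤ (C j).card := hcard j
    have hτm : τ ≤ (C j).card := hτ j
    have hmR2 : (2:ℝ) ≤ ((C j).card : ℝ) := by exact_mod_cast hm2
    have hm0 : (0:ℝ) < ((C j).card : ℝ) := by linarith
    have hm1 : (0:ℝ) < ((C j).card : ℝ) - 1 := by linarith
    have hτmR : (τ:ℝ) ≤ ((C j).card : ℝ) := by exact_mod_cast hτm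
    have hqj := hq j
    have hb0 : (0:ℝ) < ((C j).card.choose τ : ℝ) := by
      exact_mod_cast Nat.choose_pos hτm
    have hAne : (C j).Nonempty :=
      Finset.card_pos.mp (lt_of_lt_of_le (by norm_num) hm2)
    have hLmax : ∀ i ∈ C j, L i ≤ (C j).sup'
        (Finset.card_pos.mp (lt_of_lt_of_le (by norm_num) (hcard j))) L :=
      fun i hi => Finset.le_sup' L hi
    have hSD : 0 ≤ ∑ i ∈ C j, D i := Finset.sum_nonneg fun i _ => hD i
    have hSH : ∑ i ∈ C j, ‖g i x - g i y‖^2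
        ≤ 2 * ((C j).sup' (Finset.card_pos.mp (lt_of_lt_of_le (by norm_num) (hcard j))) L)
          * ∑ i ∈ C j, D i := by
      rw [Finset.mul_sum]
      refine Finset.sum_le_sum fun i hi => le_trans (hHi i) ?_
      have h1 := hD i
      have h2 := hLmax i hi
      nlinarith
    -- average function bound
    have hHS : ‖∑ i ∈ C j, (g i x - g i y)‖^2
        ≤ 2 * LC j * ((C j).card : ℝ) * ∑ i ∈ C j, D i := by
      set F : EuclideanSpace ℝ (Fin d) → ℝ :=
        fun z => (((C j).card : ℝ))⁻¹ * ∑ i ∈ C j, f i z with hF_def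
      set G : EuclideanSpace ℝ (Fin d) → EuclideanSpace ℝ (Fin d) :=
        fun z => (((C j).card : ℝ))⁻¹ • ∑ i ∈ C j, g i z with hG_def
      have hFg : ∀ z, HasGradientAt F (G z) z := by
        intro z
        have hsum : HasFDerivAt (fun w => ∑ i ∈ C j, f i w)
            (∑ i ∈ C j, InnerProductSpace.toDual ℝ _ (g i z)) z :=
          HasFDerivAt.fun_sum (fun i _ => (hgrad i z).hasFDerivAt)
        have h2 := hsum.const_mul (((C j).card : ℝ))⁻¹
        have hmap : (((C j).card : ℝ))⁻¹ • ∑ i ∈ C j, InnerProductSpace.toDual ℝ _ (g i z)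
            = InnerProductSpace.toDual ℝ _ (G z) := by
          simp only [hG_def, map_smul, map_sum]
        rw [hmap] at h2
        have h3 := h2.hasGradientAt
        rwa [LinearIsometryEquiv.symm_apply_apply] at h3
      have hFconv : ConvexOn ℝ Set.univ F := by
        refine ⟨convex_univ, fun u _ v _ a b ha hb hab => ?_⟩
        simp only [hF_def, smul_eq_mul]
        have hsum : ∑ i ∈ C j, f i (a • u + b • v) ≤ ∑ i ∈ C j, (a * f i u + b * f i v) :=
          Finset.sum_le_sum fun i _ => by
            have := (hconv i).2 (Set.mem_univ u) (Set.mem_univ v) ha hb hab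
            simpa using this
        have hc : (0:ℝ) ≤ (((C j).card : ℝ))⁻¹ := by positivity
        calc (((C j).card : ℝ))⁻¹ * ∑ i ∈ C j, f i (a • u + b • v)
            ≤ (((C j).card : ℝ))⁻¹ * ∑ i ∈ C j, (a * f i u + b * f i v) :=
              mul_le_mul_of_nonneg_left hsum hc
          _ = a * ((((C j).card : ℝ))⁻¹ * ∑ i ∈ C j, f i u)
              + b * ((((C j).card : ℝ))⁻¹ * ∑ i ∈ C j, f i v) := by
              rw [Finset.sum_add_distrib, ← Finset.mul_sum, ← Finset.mul_sum]; ring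
      have hGLip : ∀ u v, ‖G u - G v‖ ≤ LC j * ‖u - v‖ := fun u v => hLC j u v
      have hco := cocoercivity hFg hFconv hGLip x y
      have hGxy : G x - G y = (((C j).card : ℝ))⁻¹ • ∑ i ∈ C j, (g i x - g i y) := by
        simp only [hG_def]
        rw [← smul_sub, ← Finset.sum_sub_distrib]
      have hnormG : ‖G x - G y‖^2 = ((((C j).card : ℝ))⁻¹)^2 * ‖∑ i ∈ C j, (g i x - g i y)‖^2 := by
        rw [hGxy, norm_smul, Real.norm_eq_abs, mul_pow, sq_abs]
      have hFD : F x - F y - ⟪G y, x - y⟫ = (((C j).card : ℝ))⁻¹ * ∑ i ∈ C j, D i := by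
        simp only [hF_def, hG_def, hD_def]
        rw [real_inner_smul_left, sum_inner, Finset.sum_sub_distrib, Finset.sum_sub_distrib]
        ring
      rw [hnormG, hFD] at hco
      have hmne : ((C j).card : ℝ) ≠ 0 := ne_of_gt hm0
      have harith1 : ∀ a : ℝ, ((C j).card : ℝ)^2 * (((C j).card : ℝ)⁻¹ ^ 2 * a) = a := by
        intro a; field_simp
      have harith2 : ∀ a : ℝ, ((C j).card : ℝ)^2 * (2 * LC j * (((C j).card : ℝ)⁻¹ * a))
          = 2 * LC j * ((C j).card : ℝ) * a := by
        intro a; field_simp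
      have h5 := mul_le_mul_of_nonneg_left hco (sq_nonneg ((C j).card : ℝ))
      rw [harith1, harith2] at h5
      exact h5
    -- rewrite the sum over subsets
    have hstep : ∀ S ∈ (C j).powersetCard τ,
        ‖(n : ℝ)⁻¹ • ∑ i ∈ S, (((C j).card : ℝ) / (q j * (τ : ℝ))) • (g i x - g i y)‖ ^ 2
          = ((n : ℝ)⁻¹ * (((C j).card : ℝ) / (q j * (τ : ℝ))))^2
            * ‖∑ i ∈ S, (g i x - g i y)‖^2 := by
      intro S _
      rw [← Finset.smul_sum, smul_smul, norm_smul, Real.norm_eq_abs, mul_pow, sq_abs]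
    rw [Finset.sum_congr rfl hstep, ← Finset.mul_sum,
      sum_powersetCard_norm_sq (C j) (fun i => g i x - g i y) τ hτ1]
    -- cast identities
    have hb1 : ((C j).card.choose τ : ℝ) * τ
        = ((C j).card : ℝ) * ((((C j).card - 1).choose (τ-1) : ℕ) : ℝ) := by
      exact_mod_cast congrArg (Nat.cast : ℕ → ℝ) (choose_id1 (C j).card τ hτ1 hτm)
    have hb2 : ((C j).card.choose τ : ℝ) * ((τ:ℝ) * ((τ:ℝ)-1))
        = ((C j).card : ℝ) * (((C j).card : ℝ)-1) * ((pairCount (C j) τ : ℕ) : ℝ) := by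
      have h := congrArg (Nat.cast : ℕ → ℝ) (choose_id2 (C j) τ hτ1 hm2 hτm)
      push_cast [Nat.cast_sub hτ1, Nat.cast_sub (le_trans one_le_two hm2)] at h
      linarith
    have hN1 : ((((C j).card - 1).choose (τ-1) : ℕ) : ℝ)
        = ((C j).card.choose τ : ℝ) * τ / ((C j).card : ℝ) := by
      rw [eq_div_iff (ne_of_gt hm0)]
      linarith [hb1]
    have hP2 : ((pairCount (C j) τ : ℕ) : ℝ)
        = ((C j).card.choose τ : ℝ) * ((τ:ℝ) * ((τ:ℝ)-1))
          / (((C j).card : ℝ) * (((C j).card : ℝ)-1)) := by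
      rw [eq_div_iff ((mul_pos hm0 hm1).ne' : ((C j).card : ℝ) * (((C j).card : ℝ)-1) ≠ 0)]
      linarith [hb2]
    have hc1 : 0 ≤ ((((C j).card - 1).choose (τ-1) : ℕ) : ℝ) - ((pairCount (C j) τ : ℕ) : ℝ) := by
      have hrw : ((((C j).card - 1).choose (τ-1) : ℕ) : ℝ) - ((pairCount (C j) τ : ℕ) : ℝ)
          = ((C j).card.choose τ : ℝ) * τ * (((C j).card : ℝ) - τ)
            / (((C j).card : ℝ) * (((C j).card : ℝ)-1)) := by
        rw [hN1, hP2, div_sub_div _ _ hm0.ne' (mul_pos hm0 hm1).ne',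
          div_eq_div_iff (mul_ne_zero hm0.ne' (mul_pos hm0 hm1).ne') (mul_pos hm0 hm1).ne']
        ring
      rw [hrw]
      apply div_nonneg
      · apply mul_nonneg (mul_nonneg hb0.le hτ0.le)
        linarith
      · exact (mul_pos hm0 hm1).le
    have hP2pos : (0:ℝ) ≤ ((pairCount (C j) τ : ℕ) : ℝ) := Nat.cast_nonneg _
    -- bound the two norm quantities
    have hmain : ((pairCount (C j) τ : ℕ) : ℝ) * ‖∑ i ∈ (C j), (g i x - g i y)‖^2
          + (((((C j).card - 1).choose (τ-1) : ℕ) : ℝ) - ((pairCount (C j) τ : ℕ) : ℝ))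
            * ∑ i ∈ C j, ‖g i x - g i y‖^2
        ≤ ((pairCount (C j) τ : ℕ) : ℝ) * (2 * LC j * ((C j).card : ℝ) * ∑ i ∈ C j, D i)
          + (((((C j).card - 1).choose (τ-1) : ℕ) : ℝ) - ((pairCount (C j) τ : ℕ) : ℝ))
            * (2 * ((C j).sup' (Finset.card_pos.mp (lt_of_lt_of_le (by norm_num) (hcard j))) L)
              * ∑ i ∈ C j, D i) :=
      add_le_add (mul_le_mul_of_nonneg_left hHS hP2pos) (mul_le_mul_of_nonneg_left hSH hc1)
    have hfac : 0 ≤ q j * ((C j).card.choose τ : ℝ)⁻¹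
        * ((n : ℝ)⁻¹ * (((C j).card : ℝ) / (q j * (τ : ℝ))))^2 :=
        mul_nonneg (mul_nonneg hqj.le (inv_nonneg.mpr hb0.le)) (sq_nonneg _)
    calc q j * ((C j).card.choose τ : ℝ)⁻¹
          * (((n : ℝ)⁻¹ * (((C j).card : ℝ) / (q j * (τ : ℝ))))^2
            * (((pairCount (C j) τ : ℕ) : ℝ) * ‖∑ i ∈ (C j), (g i x - g i y)‖^2
              + (((((C j).card - 1).choose (τ-1) : ℕ) : ℝ) - ((pairCount (C j) τ : ℕ) : ℝ))
                * ∑ i ∈ C j, ‖g i x - g i y‖^2))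
        ≤ q j * ((C j).card.choose τ : ℝ)⁻¹
          * (((n : ℝ)⁻¹ * (((C j).card : ℝ) / (q j * (τ : ℝ))))^2
            * (((pairCount (C j) τ : ℕ) : ℝ) * (2 * LC j * ((C j).card : ℝ) * ∑ i ∈ C j, D i)
              + (((((C j).card - 1).choose (τ-1) : ℕ) : ℝ) - ((pairCount (C j) τ : ℕ) : ℝ))
                * (2 * ((C j).sup' (Finset.card_pos.mp
                    (lt_of_lt_of_le (by norm_num) (hcard j))) L) * ∑ i ∈ C j, D i))) := by
          rw [← mul_assoc, ← mul_assoc]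
          exact mul_le_mul_of_nonneg_left hmain hfac
      _ = 2/((n:ℝ)^2 * τ) * (((C j).card : ℝ) / (q j * (((C j).card : ℝ) - 1)) *
            (((τ : ℝ) - 1) * LC j * ((C j).card : ℝ) +
              (((C j).card : ℝ) - (τ : ℝ)) *
                (C j).sup' (Finset.card_pos.mp (lt_of_lt_of_le (by norm_num) (hcard j))) L))
            * ∑ i ∈ C j, D i := by
          exact scalar_key (q j) ((C j).card.choose τ : ℝ) (n:ℝ) (τ:ℝ) ((C j).card : ℝ)
            _ _ (LC j) _ _ (ne_of_gt hb0) (ne_of_gt hqj) (ne_of_gt hn0) (ne_of_gt hτ0)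
            (ne_of_gt hm1) (ne_of_gt hm0) hN1 hP2
  -- sum over partitions
  have hpartsum : ∑ j, ∑ i ∈ C j, D i = ∑ i, D i := by
    have h1 : ∀ j, ∑ i ∈ C j, D i = ∑ i : Fin n, if i ∈ C j then D i else 0 := by
      intro j
      rw [Finset.sum_ite_mem, Finset.univ_inter]
    simp_rw [h1]
    rw [Finset.sum_comm]
    refine Finset.sum_congr rfl fun i _ => ?_
    obtain ⟨j₀, hj₀, huniq⟩ := hpart i
    rw [Finset.sum_eq_single_of_mem j₀ (Finset.mem_univ _)
      (fun j _ hne => if_neg (fun hc => hne (huniq j hc)))]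
    exact if_pos hj₀
  have hKM : ∀ j : Fin K, (((C j).card : ℝ) / (q j * (((C j).card : ℝ) - 1)) *
      (((τ : ℝ) - 1) * LC j * ((C j).card : ℝ) +
        (((C j).card : ℝ) - (τ : ℝ)) *
          (C j).sup' (Finset.card_pos.mp (lt_of_lt_of_le (by norm_num) (hcard j))) L)) ≤ M := by
    intro j
    rw [hM_def]
    exact Finset.le_sup' (fun j => ((C j).card : ℝ) / (q j * (((C j).card : ℝ) - 1)) *
      (((τ : ℝ) - 1) * LC j * ((C j).card : ℝ) +
        (((C j).card : ℝ) - (τ : ℝ)) *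
          (C j).sup' (Finset.card_pos.mp (lt_of_lt_of_le (by norm_num) (hcard j))) L))
      (Finset.mem_univ j)
  have hRHS : (n : ℝ)⁻¹ * ∑ i, f i x - (n : ℝ)⁻¹ * ∑ i, f i y
      - ⟪(n : ℝ)⁻¹ • ∑ i, g i y, x - y⟫ = (n:ℝ)⁻¹ * ∑ i, D i := by
    simp only [hD_def]
    rw [real_inner_smul_left, sum_inner, Finset.sum_sub_distrib, Finset.sum_sub_distrib]
    ring
  calc ∑ j, q j * ((C j).card.choose τ : ℝ)⁻¹ *
        ∑ S ∈ (C j).powersetCard τ,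
          ‖(n : ℝ)⁻¹ • ∑ i ∈ S, (((C j).card : ℝ) / (q j * (τ : ℝ))) • (g i x - g i y)‖ ^ 2
      ≤ ∑ j, 2/((n:ℝ)^2 * τ) * (((C j).card : ℝ) / (q j * (((C j).card : ℝ) - 1)) *
          (((τ : ℝ) - 1) * LC j * ((C j).card : ℝ) +
            (((C j).card : ℝ) - (τ : ℝ)) *
              (C j).sup' (Finset.card_pos.mp (lt_of_lt_of_le (by norm_num) (hcard j))) L))
          * ∑ i ∈ C j, D i := Finset.sum_le_sum fun j _ => key j
    _ ≤ ∑ j, 2/((n:ℝ)^2 * τ) * M * ∑ i ∈ C j, D i := by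
        refine Finset.sum_le_sum fun j _ => ?_
        have hSDj : 0 ≤ ∑ i ∈ C j, D i := Finset.sum_nonneg fun i _ => hD i
        have hpos : (0:ℝ) ≤ 2/((n:ℝ)^2 * τ) := by positivity
        apply mul_le_mul_of_nonneg_right _ hSDj
        exact mul_le_mul_of_nonneg_left (hKM j) hpos
    _ = 2/((n:ℝ)^2 * τ) * M * ∑ i, D i := by
        rw [← Finset.mul_sum, hpartsum]
    _ = 2 * (((n : ℝ) * (τ : ℝ))⁻¹ * M) * ((n:ℝ)⁻¹ * ∑ i, D i) := by
        have h1 : (((n:ℝ)^2 * τ))⁻¹ = ((n:ℝ) * (τ:ℝ))⁻¹ * (n:ℝ)⁻¹ := by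
          rw [← mul_inv]
          congr 1
          ring
        rw [div_eq_mul_inv, h1]
        ring
    _ = 2 * (((n : ℝ) * (τ : ℝ))⁻¹ * M) *
        ((n : ℝ)⁻¹ * ∑ i, f i x - (n : ℝ)⁻¹ * ∑ i, f i y -
          ⟪(n : ℝ)⁻¹ • ∑ i, g i y, x - y⟫) := by rw [hRHS]
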